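/- Under the uniform measure μ on configurations η ∈ {0,1}^{Z/NZ} with exactly k particles (k ≤ N/2), the fourth moment of a₁(η) = Σ_x η(x)cos(2πx/N) satisfies E_μ[a₁(η)⁴] ≤ C·k² for a universal constant C. -/

import Mathlib

open scoped BigOperators
open Finset Complex

namespace Stmt7Aux
set_option linter.unusedSectionVars false

/-! ### The standard additive character -/

noncomputable def ψ (N : ℕ) [NeZero N] : AddChar (ZMod N) ℂ := ZMod.stdAddChar

variable {N : ℕ} [NeZero N]

lemma sum_psi_mul (b : ZMod N) (hb : b ≠ 0) : ∑ x : ZMod N, ψ N (x * b) = 0 := by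
  rw [show (∑ x : ZMod N, ψ N (x * b)) = ∑ x : ZMod N, ZMod.stdAddChar (x * b) from rfl,
    AddChar.sum_mulShift b (ZMod.isPrimitive_stdAddChar N)]
  simp [hb]

lemma one_ne_zero' (hN : 3 ≤ N) : ((1 : ZMod N)) ≠ 0 := by
  intro h
  have h2 : (N:ℕ) ∣ 1 := (ZMod.natCast_eq_zero_iff 1 N).mp (by exact_mod_cast h)
  have := Nat.le_of_dvd (by norm_num) h2
  omega

lemma neg_one_ne_zero' (hN : 3 ≤ N) : ((-1 : ZMod N)) ≠ 0 := by
  intro h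
  exact one_ne_zero' hN (by rwa [neg_eq_zero] at h)

lemma two_ne_zero' (hN : 3 ≤ N) : ((2 : ZMod N)) ≠ 0 := by
  intro h
  have h2 : (N:ℕ) ∣ 2 := (ZMod.natCast_eq_zero_iff 2 N).mp (by exact_mod_cast h)
  have := Nat.le_of_dvd (by norm_num) h2
  omega

lemma psi_conj (x : ZMod N) : (starRingEnd ℂ) (ψ N x) = ψ N (-x) := by
  have h1 : ψ N x * ψ N (-x) = 1 := by rw [← AddChar.map_add_eq_mul]; simp
  have h2 : (starRingEnd ℂ) (ψ N x) * ψ N x = 1 := by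
    rw [show ψ N x = ZMod.stdAddChar x from rfl, ZMod.stdAddChar_apply]
    rw [mul_comm, Complex.mul_conj]
    norm_cast
    simp
  have hne : ψ N x ≠ 0 := by
    intro h
    rw [h, mul_zero] at h2
    exact one_ne_zero h2.symm
  have h1' : ψ N (-x) * ψ N x = 1 := by rw [mul_comm]; exact h1
  exact mul_right_cancel₀ hne (h2.trans h1'.symm)

lemma psi_re (x : ZMod N) : (ψ N x).re = Real.cos (2 * Real.pi * (x.val:ℝ) / N) := by
  rw [show ψ N x = ZMod.stdAddChar x from rfl, ZMod.stdAddChar_apply, ZMod.toCircle_apply]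
  rw [show 2 * ↑Real.pi * Complex.I * ↑(ZMod.val x) / ↑N
      = ((2 * Real.pi * (x.val:ℝ) / N : ℝ) : ℂ) * Complex.I by push_cast; ring]
  exact Complex.exp_ofReal_mul_I_re _

lemma psi_normSq (x : ZMod N) : Complex.normSq (ψ N x) = 1 := by
  have h2 : (starRingEnd ℂ) (ψ N x) * ψ N x = 1 := by
    rw [psi_conj]
    rw [← AddChar.map_add_eq_mul]
    simp
  have := Complex.mul_conj (ψ N x)
  rw [mul_comm] at this
  rw [this] at h2
  exact_mod_cast h2

/-! ### Atomic character sums -/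

lemma sa1 (hN : 3 ≤ N) : ∑ x : ZMod N, ψ N x = 0 := by
  have := sum_psi_mul (N := N) 1 (one_ne_zero' hN)
  simpa using this

lemma sa2 (hN : 3 ≤ N) : ∑ x : ZMod N, ψ N (-x) = 0 := by
  have := sum_psi_mul (N := N) (-1) (neg_one_ne_zero' hN)
  simpa [mul_neg_one] using this

lemma sa3 (hN : 3 ≤ N) : ∑ x : ZMod N, ψ N x * ψ N x = 0 := by
  have := sum_psi_mul (N := N) 2 (two_ne_zero' hN)
  rw [← this]
  refine Finset.sum_congr rfl fun x _ => ?_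
  rw [← AddChar.map_add_eq_mul]
  congr 1
  ring

lemma sa4 (hN : 3 ≤ N) : ∑ x : ZMod N, ψ N (-x) * ψ N (-x) = 0 := by
  have := sum_psi_mul (N := N) (-2) (by
    intro h; exact two_ne_zero' hN (by rwa [neg_eq_zero] at h))
  rw [← this]
  refine Finset.sum_congr rfl fun x _ => ?_
  rw [← AddChar.map_add_eq_mul]
  congr 1
  ring

lemma sa5 : ∑ x : ZMod N, ψ N x * ψ N (-x) = (N : ℂ) := by
  have : ∀ x : ZMod N, ψ N x * ψ N (-x) = 1 := fun x => by
    rw [← AddChar.map_add_eq_mul]; simp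
  simp only [this]
  simp [Finset.card_univ, ZMod.card]

lemma sa6 (hN : 3 ≤ N) : ∑ x : ZMod N, ψ N x * ψ N x * ψ N (-x) = 0 := by
  have : ∀ x : ZMod N, ψ N x * ψ N x * ψ N (-x) = ψ N x := fun x => by
    rw [mul_assoc, ← AddChar.map_add_eq_mul]; simp
  simp only [this]
  exact sa1 hN

lemma sa7 (hN : 3 ≤ N) : ∑ x : ZMod N, ψ N x * ψ N (-x) * ψ N (-x) = 0 := by
  have : ∀ x : ZMod N, ψ N x * ψ N (-x) * ψ N (-x) = ψ N (-x) := fun x => by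
    rw [show ψ N x * ψ N (-x) = 1 by rw [← AddChar.map_add_eq_mul]; simp, one_mul]
  simp only [this]
  exact sa2 hN

lemma sa8 : ∑ x : ZMod N, ψ N x * ψ N x * ψ N (-x) * ψ N (-x) = (N : ℂ) := by
  have : ∀ x : ZMod N, ψ N x * ψ N x * ψ N (-x) * ψ N (-x) = 1 := fun x => by
    rw [show ψ N x * ψ N x * ψ N (-x) * ψ N (-x)
        = (ψ N x * ψ N (-x)) * (ψ N x * ψ N (-x)) by ring,
      ← AddChar.map_add_eq_mul]
    simp
  simp only [this]
  simp [Finset.card_univ, ZMod.card]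

/-! ### Abstract collapse lemmas -/
section Abstract
variable {α : Type*} [Fintype α] [DecidableEq α]


section
variable (f g h j : α → ℂ)

lemma split2 : (∑ x, f x) * (∑ y, g y) = ∑ x, ∑ y, f x * g y :=
  Finset.sum_mul_sum _ _ _ _

lemma pull4 (F : α → α → α → α → ℂ) (a : ℂ) :
    ∑ x, ∑ z, ∑ y, ∑ w, F x z y w * a = (∑ x, ∑ z, ∑ y, ∑ w, F x z y w) * a := by
  simp only [← Finset.sum_mul]

lemma split3 : (∑ x, f x) * ((∑ y, g y) * (∑ w, h w)) = ∑ x, ∑ y, ∑ w, f x * (g y * h w) := by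
  rw [split2 g h, split2 f _]
  simp only [Finset.mul_sum]

lemma split4 : (∑ x, f x) * ((∑ z, g z) * ((∑ y, h y) * (∑ w, j w)))
    = ∑ x, ∑ z, ∑ y, ∑ w, f x * (g z * (h y * j w)) := by
  rw [split3 g h j, split2 f _]
  simp only [Finset.mul_sum]

lemma A0 : ∑ x, ∑ z, ∑ y, ∑ w, f x * g z * h y * j w
    = (∑ x, f x) * ((∑ z, g z) * ((∑ y, h y) * (∑ w, j w))) := by
  rw [split4]
  exact Finset.sum_congr rfl fun _ _ => Finset.sum_congr rfl fun _ _ =>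
    Finset.sum_congr rfl fun _ _ => Finset.sum_congr rfl fun _ _ => by ring

lemma A1 : ∑ x, ∑ z, ∑ y, ∑ w, f x * g z * h y * j w * (if x = z then (1:ℂ) else 0)
    = (∑ x, f x * g x) * ((∑ y, h y) * (∑ w, j w)) := by
  simp only [mul_ite, ite_mul, mul_one, one_mul, mul_zero, zero_mul,
    Finset.sum_ite_irrel, Finset.sum_ite_eq, Finset.sum_ite_eq', Finset.sum_const_zero,
    mem_univ, if_true]
  rw [split3]
  exact Finset.sum_congr rfl fun _ _ => Finset.sum_congr rfl fun _ _ =>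
    Finset.sum_congr rfl fun _ _ => by ring

lemma A2 : ∑ x, ∑ z, ∑ y, ∑ w, f x * g z * h y * j w * (if x = y then (1:ℂ) else 0)
    = (∑ x, f x * h x) * ((∑ z, g z) * (∑ w, j w)) := by
  simp only [mul_ite, ite_mul, mul_one, one_mul, mul_zero, zero_mul,
    Finset.sum_ite_irrel, Finset.sum_ite_eq, Finset.sum_ite_eq', Finset.sum_const_zero,
    mem_univ, if_true]
  rw [split3]
  exact Finset.sum_congr rfl fun _ _ => Finset.sum_congr rfl fun _ _ =>
    Finset.sum_congr rfl fun _ _ => by ring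

lemma A3 : ∑ x, ∑ z, ∑ y, ∑ w, f x * g z * h y * j w * (if x = w then (1:ℂ) else 0)
    = (∑ x, f x * j x) * ((∑ z, g z) * (∑ y, h y)) := by
  simp only [mul_ite, ite_mul, mul_one, one_mul, mul_zero, zero_mul,
    Finset.sum_ite_irrel, Finset.sum_ite_eq, Finset.sum_ite_eq', Finset.sum_const_zero,
    mem_univ, if_true]
  rw [split3]
  exact Finset.sum_congr rfl fun _ _ => Finset.sum_congr rfl fun _ _ =>
    Finset.sum_congr rfl fun _ _ => by ring

lemma A4 : ∑ x, ∑ z, ∑ y, ∑ w, f x * g z * h y * j w * (if z = y then (1:ℂ) else 0)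
    = (∑ z, g z * h z) * ((∑ x, f x) * (∑ w, j w)) := by
  simp only [mul_ite, ite_mul, mul_one, one_mul, mul_zero, zero_mul,
    Finset.sum_ite_irrel, Finset.sum_ite_eq, Finset.sum_ite_eq', Finset.sum_const_zero,
    mem_univ, if_true]
  rw [split3]
  rw [Finset.sum_comm]
  exact Finset.sum_congr rfl fun _ _ => Finset.sum_congr rfl fun _ _ =>
    Finset.sum_congr rfl fun _ _ => by ring

lemma A5 : ∑ x, ∑ z, ∑ y, ∑ w, f x * g z * h y * j w * (if z = w then (1:ℂ) else 0)
    = (∑ z, g z * j z) * ((∑ x, f x) * (∑ y, h y)) := by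
  simp only [mul_ite, ite_mul, mul_one, one_mul, mul_zero, zero_mul,
    Finset.sum_ite_irrel, Finset.sum_ite_eq, Finset.sum_ite_eq', Finset.sum_const_zero,
    mem_univ, if_true]
  rw [split3]
  rw [Finset.sum_comm]
  exact Finset.sum_congr rfl fun _ _ => Finset.sum_congr rfl fun _ _ =>
    Finset.sum_congr rfl fun _ _ => by ring

lemma A6 : ∑ x, ∑ z, ∑ y, ∑ w, f x * g z * h y * j w * (if y = w then (1:ℂ) else 0)
    = (∑ x, f x) * ((∑ z, g z) * (∑ y, h y * j y)) := by
  simp only [mul_ite, ite_mul, mul_one, one_mul, mul_zero, zero_mul,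
    Finset.sum_ite_irrel, Finset.sum_ite_eq, Finset.sum_ite_eq', Finset.sum_const_zero,
    mem_univ, if_true]
  rw [split3]
  exact Finset.sum_congr rfl fun _ _ => Finset.sum_congr rfl fun _ _ =>
    Finset.sum_congr rfl fun _ _ => by ring

lemma P1 : ∑ x, ∑ z, ∑ y, ∑ w, f x * g z * h y * j w
      * ((if x = y then (1:ℂ) else 0) * (if z = w then (1:ℂ) else 0))
    = (∑ x, f x * h x) * (∑ z, g z * j z) := by
  simp only [mul_ite, ite_mul, mul_one, one_mul, mul_zero, zero_mul,
    Finset.sum_ite_irrel, Finset.sum_ite_eq, Finset.sum_ite_eq', Finset.sum_const_zero,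
    mem_univ, if_true]
  rw [split2]
  exact Finset.sum_congr rfl fun _ _ => Finset.sum_congr rfl fun _ _ => by ring

lemma P2 : ∑ x, ∑ z, ∑ y, ∑ w, f x * g z * h y * j w
      * ((if x = w then (1:ℂ) else 0) * (if z = y then (1:ℂ) else 0))
    = (∑ x, f x * j x) * (∑ z, g z * h z) := by
  simp only [mul_ite, ite_mul, mul_one, one_mul, mul_zero, zero_mul,
    Finset.sum_ite_irrel, Finset.sum_ite_eq, Finset.sum_ite_eq', Finset.sum_const_zero,
    mem_univ, if_true]
  rw [split2]
  exact Finset.sum_congr rfl fun _ _ => Finset.sum_congr rfl fun _ _ => by ring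

lemma P3 : ∑ x, ∑ z, ∑ y, ∑ w, f x * g z * h y * j w
      * ((if x = z then (1:ℂ) else 0) * (if y = w then (1:ℂ) else 0))
    = (∑ x, f x * g x) * (∑ y, h y * j y) := by
  simp only [mul_ite, ite_mul, mul_one, one_mul, mul_zero, zero_mul,
    Finset.sum_ite_irrel, Finset.sum_ite_eq, Finset.sum_ite_eq', Finset.sum_const_zero,
    mem_univ, if_true]
  rw [split2]
  exact Finset.sum_congr rfl fun _ _ => Finset.sum_congr rfl fun _ _ => by ring

lemma T1 : ∑ x, ∑ z, ∑ y, ∑ w, f x * g z * h y * j w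
      * ((if x = z then (1:ℂ) else 0) * (if x = y then (1:ℂ) else 0))
    = (∑ x, f x * g x * h x) * (∑ w, j w) := by
  simp only [mul_ite, ite_mul, mul_one, one_mul, mul_zero, zero_mul,
    Finset.sum_ite_irrel, Finset.sum_ite_eq, Finset.sum_ite_eq', Finset.sum_const_zero,
    mem_univ, if_true]
  rw [split2]

lemma T2 : ∑ x, ∑ z, ∑ y, ∑ w, f x * g z * h y * j w
      * ((if x = z then (1:ℂ) else 0) * (if x = w then (1:ℂ) else 0))
    = (∑ x, f x * g x * j x) * (∑ y, h y) := by
  simp only [mul_ite, ite_mul, mul_one, one_mul, mul_zero, zero_mul,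
    Finset.sum_ite_irrel, Finset.sum_ite_eq, Finset.sum_ite_eq', Finset.sum_const_zero,
    mem_univ, if_true]
  rw [split2]
  exact Finset.sum_congr rfl fun _ _ => Finset.sum_congr rfl fun _ _ => by ring

lemma T3 : ∑ x, ∑ z, ∑ y, ∑ w, f x * g z * h y * j w
      * ((if x = y then (1:ℂ) else 0) * (if x = w then (1:ℂ) else 0))
    = (∑ x, f x * h x * j x) * (∑ z, g z) := by
  simp only [mul_ite, ite_mul, mul_one, one_mul, mul_zero, zero_mul,
    Finset.sum_ite_irrel, Finset.sum_ite_eq, Finset.sum_ite_eq', Finset.sum_const_zero,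
    mem_univ, if_true]
  rw [split2]
  exact Finset.sum_congr rfl fun _ _ => Finset.sum_congr rfl fun _ _ => by ring

lemma T4 : ∑ x, ∑ z, ∑ y, ∑ w, f x * g z * h y * j w
      * ((if z = y then (1:ℂ) else 0) * (if z = w then (1:ℂ) else 0))
    = (∑ z, g z * h z * j z) * (∑ x, f x) := by
  simp only [mul_ite, ite_mul, mul_one, one_mul, mul_zero, zero_mul,
    Finset.sum_ite_irrel, Finset.sum_ite_eq, Finset.sum_ite_eq', Finset.sum_const_zero,
    mem_univ, if_true]
  rw [split2]
  rw [Finset.sum_comm]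
  exact Finset.sum_congr rfl fun _ _ => Finset.sum_congr rfl fun _ _ => by ring

lemma TOP : ∑ x, ∑ z, ∑ y, ∑ w, f x * g z * h y * j w
      * ((if x = z then (1:ℂ) else 0) * ((if x = y then (1:ℂ) else 0) * (if x = w then (1:ℂ) else 0)))
    = ∑ x, f x * g x * h x * j x := by
  simp only [mul_ite, ite_mul, mul_one, one_mul, mul_zero, zero_mul,
    Finset.sum_ite_irrel, Finset.sum_ite_eq, Finset.sum_ite_eq', Finset.sum_const_zero,
    mem_univ, if_true]

end
end Abstract

/-! ### Counting supersets -/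

def cnt (N k j : ℕ) : ℕ := if j ≤ k then (N - j).choose (k - j) else 0

lemma count_supersets (k : ℕ) (T : Finset (ZMod N)) :
    (((univ : Finset (Finset (ZMod N))).filter (fun S => S.card = k)).filter
      (fun S => T ⊆ S)).card = cnt N k T.card := by
  rw [cnt]
  split_ifs with h
  · have hcompl : ((univ : Finset (ZMod N)) \ T).card = N - T.card := by
      rw [card_sdiff_of_subset (subset_univ _), card_univ, ZMod.card]
    rw [← hcompl, ← Finset.card_powersetCard (k - T.card) ((univ : Finset (ZMod N)) \ T)]
    apply Finset.card_bij' (fun S _ => S \ T) (fun U _ => U ∪ T)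
    · intro S hS
      simp only [mem_filter, mem_univ, true_and] at hS
      simp only [Finset.mem_powersetCard]
      exact ⟨sdiff_subset_sdiff (subset_univ _) le_rfl,
        by rw [card_sdiff_of_subset hS.2, hS.1]⟩
    · intro U hU
      simp only [Finset.mem_powersetCard] at hU
      have hdisj : Disjoint U T := Finset.disjoint_left.mpr
        (fun a ha => (Finset.mem_sdiff.mp (hU.1 ha)).2)
      simp only [mem_filter, mem_univ, true_and]
      constructor
      · rw [Finset.card_union_of_disjoint hdisj, hU.2]
        omega
      · exact Finset.subset_union_right
    · intro S hS
      simp only [mem_filter, mem_univ, true_and] at hS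
      exact Finset.sdiff_union_of_subset hS.2
    · intro U hU
      simp only [Finset.mem_powersetCard] at hU
      have hdisj : Disjoint U T := Finset.disjoint_left.mpr
        (fun a ha => (Finset.mem_sdiff.mp (hU.1 ha)).2)
      rw [Finset.union_sdiff_distrib, Finset.sdiff_self, Finset.union_empty,
        Finset.sdiff_eq_self_of_disjoint hdisj]
  · rw [Finset.card_eq_zero, Finset.filter_eq_empty_iff]
    intro S hS
    simp only [mem_filter, mem_univ, true_and] at hS
    intro hsub
    exact h (hS ▸ Finset.card_le_card hsub)

/-! ### Delta expansion -/

lemma delta_expand {α : Type*} [DecidableEq α] (c : ℕ → ℂ) (x z y w : α) :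
    c ({x, z, y, w} : Finset α).card
      = c 4
      + ((if x = z then (1:ℂ) else 0) + (if x = y then (1:ℂ) else 0)
          + (if x = w then (1:ℂ) else 0) + (if z = y then (1:ℂ) else 0)
          + (if z = w then (1:ℂ) else 0) + (if y = w then (1:ℂ) else 0)) * (c 3 - c 4)
      + ((if x = y then (1:ℂ) else 0) * (if z = w then (1:ℂ) else 0)
          + (if x = w then (1:ℂ) else 0) * (if z = y then (1:ℂ) else 0)
          + (if x = z then (1:ℂ) else 0) * (if y = w then (1:ℂ) else 0))
          * (c 2 - 2 * c 3 + c 4)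
      + ((if x = z then (1:ℂ) else 0) * (if x = y then (1:ℂ) else 0)
          + (if x = z then (1:ℂ) else 0) * (if x = w then (1:ℂ) else 0)
          + (if x = y then (1:ℂ) else 0) * (if x = w then (1:ℂ) else 0)
          + (if z = y then (1:ℂ) else 0) * (if z = w then (1:ℂ) else 0))
          * (c 2 - 3 * c 3 + 2 * c 4)
      + ((if x = z then (1:ℂ) else 0) * ((if x = y then (1:ℂ) else 0)
            * (if x = w then (1:ℂ) else 0)))
          * (c 1 - 7 * c 2 + 12 * c 3 - 6 * c 4) := by
  by_cases hxz : x = z <;> by_cases hxy : x = y <;> by_cases hxw : x = w <;>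
    by_cases hzy : z = y <;> by_cases hzw : z = w <;> by_cases hyw : y = w <;>
    simp_all [Finset.card_insert_of_notMem, Finset.mem_insert, Finset.mem_singleton] <;>
    ring

/-! ### Master identity -/

set_option maxHeartbeats 1000000 in
lemma master (k : ℕ) (hN : 3 ≤ N) :
    (∑ x : ZMod N, ∑ z : ZMod N, ∑ y : ZMod N, ∑ w : ZMod N,
        ψ N x * ψ N z * ψ N (-y) * ψ N (-w)
          * ((cnt N k ({x, z, y, w} : Finset (ZMod N)).card : ℕ) : ℂ))
      = 2 * (N:ℂ)^2 * ((cnt N k 2 : ℂ) - 2*(cnt N k 3 : ℂ) + (cnt N k 4 : ℂ))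
        + (N:ℂ) * ((cnt N k 1 : ℂ) - 7*(cnt N k 2 : ℂ) + 12*(cnt N k 3 : ℂ)
            - 6*(cnt N k 4 : ℂ)) := by
  have key : ∀ x z y w : ZMod N,
      ψ N x * ψ N z * ψ N (-y) * ψ N (-w)
          * ((cnt N k ({x, z, y, w} : Finset (ZMod N)).card : ℕ) : ℂ)
      = (ψ N x * ψ N z * ψ N (-y) * ψ N (-w)) * ((cnt N k 4 : ℕ) : ℂ)
        + (ψ N x * ψ N z * ψ N (-y) * ψ N (-w) * (if x = z then (1:ℂ) else 0))
            * (((cnt N k 3 : ℕ) : ℂ) - ((cnt N k 4 : ℕ) : ℂ))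
        + (ψ N x * ψ N z * ψ N (-y) * ψ N (-w) * (if x = y then (1:ℂ) else 0))
            * (((cnt N k 3 : ℕ) : ℂ) - ((cnt N k 4 : ℕ) : ℂ))
        + (ψ N x * ψ N z * ψ N (-y) * ψ N (-w) * (if x = w then (1:ℂ) else 0))
            * (((cnt N k 3 : ℕ) : ℂ) - ((cnt N k 4 : ℕ) : ℂ))
        + (ψ N x * ψ N z * ψ N (-y) * ψ N (-w) * (if z = y then (1:ℂ) else 0))
            * (((cnt N k 3 : ℕ) : ℂ) - ((cnt N k 4 : ℕ) : ℂ))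
        + (ψ N x * ψ N z * ψ N (-y) * ψ N (-w) * (if z = w then (1:ℂ) else 0))
            * (((cnt N k 3 : ℕ) : ℂ) - ((cnt N k 4 : ℕ) : ℂ))
        + (ψ N x * ψ N z * ψ N (-y) * ψ N (-w) * (if y = w then (1:ℂ) else 0))
            * (((cnt N k 3 : ℕ) : ℂ) - ((cnt N k 4 : ℕ) : ℂ))
        + (ψ N x * ψ N z * ψ N (-y) * ψ N (-w)
              * ((if x = y then (1:ℂ) else 0) * (if z = w then (1:ℂ) else 0)))
            * (((cnt N k 2 : ℕ) : ℂ) - 2*((cnt N k 3 : ℕ) : ℂ) + ((cnt N k 4 : ℕ) : ℂ))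
        + (ψ N x * ψ N z * ψ N (-y) * ψ N (-w)
              * ((if x = w then (1:ℂ) else 0) * (if z = y then (1:ℂ) else 0)))
            * (((cnt N k 2 : ℕ) : ℂ) - 2*((cnt N k 3 : ℕ) : ℂ) + ((cnt N k 4 : ℕ) : ℂ))
        + (ψ N x * ψ N z * ψ N (-y) * ψ N (-w)
              * ((if x = z then (1:ℂ) else 0) * (if y = w then (1:ℂ) else 0)))
            * (((cnt N k 2 : ℕ) : ℂ) - 2*((cnt N k 3 : ℕ) : ℂ) + ((cnt N k 4 : ℕ) : ℂ))
        + (ψ N x * ψ N z * ψ N (-y) * ψ N (-w)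
              * ((if x = z then (1:ℂ) else 0) * (if x = y then (1:ℂ) else 0)))
            * (((cnt N k 2 : ℕ) : ℂ) - 3*((cnt N k 3 : ℕ) : ℂ) + 2*((cnt N k 4 : ℕ) : ℂ))
        + (ψ N x * ψ N z * ψ N (-y) * ψ N (-w)
              * ((if x = z then (1:ℂ) else 0) * (if x = w then (1:ℂ) else 0)))
            * (((cnt N k 2 : ℕ) : ℂ) - 3*((cnt N k 3 : ℕ) : ℂ) + 2*((cnt N k 4 : ℕ) : ℂ))
        + (ψ N x * ψ N z * ψ N (-y) * ψ N (-w)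
              * ((if x = y then (1:ℂ) else 0) * (if x = w then (1:ℂ) else 0)))
            * (((cnt N k 2 : ℕ) : ℂ) - 3*((cnt N k 3 : ℕ) : ℂ) + 2*((cnt N k 4 : ℕ) : ℂ))
        + (ψ N x * ψ N z * ψ N (-y) * ψ N (-w)
              * ((if z = y then (1:ℂ) else 0) * (if z = w then (1:ℂ) else 0)))
            * (((cnt N k 2 : ℕ) : ℂ) - 3*((cnt N k 3 : ℕ) : ℂ) + 2*((cnt N k 4 : ℕ) : ℂ))
        + (ψ N x * ψ N z * ψ N (-y) * ψ N (-w)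
              * ((if x = z then (1:ℂ) else 0) * ((if x = y then (1:ℂ) else 0)
                  * (if x = w then (1:ℂ) else 0))))
            * (((cnt N k 1 : ℕ) : ℂ) - 7*((cnt N k 2 : ℕ) : ℂ) + 12*((cnt N k 3 : ℕ) : ℂ)
                - 6*((cnt N k 4 : ℕ) : ℂ)) := by
    intro x z y w
    have h := delta_expand (fun j => ((cnt N k j : ℕ) : ℂ)) x z y w
    beta_reduce at h
    rw [h]
    ring
  simp only [key, Finset.sum_add_distrib]
  simp only [pull4]
  rw [A0 (ψ N) (ψ N) (fun y => ψ N (-y)) (fun w => ψ N (-w)),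
    A1 (ψ N) (ψ N) (fun y => ψ N (-y)) (fun w => ψ N (-w)),
    A2 (ψ N) (ψ N) (fun y => ψ N (-y)) (fun w => ψ N (-w)),
    A3 (ψ N) (ψ N) (fun y => ψ N (-y)) (fun w => ψ N (-w)),
    A4 (ψ N) (ψ N) (fun y => ψ N (-y)) (fun w => ψ N (-w)),
    A5 (ψ N) (ψ N) (fun y => ψ N (-y)) (fun w => ψ N (-w)),
    A6 (ψ N) (ψ N) (fun y => ψ N (-y)) (fun w => ψ N (-w)),
    P1 (ψ N) (ψ N) (fun y => ψ N (-y)) (fun w => ψ N (-w)),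
    P2 (ψ N) (ψ N) (fun y => ψ N (-y)) (fun w => ψ N (-w)),
    P3 (ψ N) (ψ N) (fun y => ψ N (-y)) (fun w => ψ N (-w)),
    T1 (ψ N) (ψ N) (fun y => ψ N (-y)) (fun w => ψ N (-w)),
    T2 (ψ N) (ψ N) (fun y => ψ N (-y)) (fun w => ψ N (-w)),
    T3 (ψ N) (ψ N) (fun y => ψ N (-y)) (fun w => ψ N (-w)),
    T4 (ψ N) (ψ N) (fun y => ψ N (-y)) (fun w => ψ N (-w)),
    TOP (ψ N) (ψ N) (fun y => ψ N (-y)) (fun w => ψ N (-w))]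
  rw [sa1 hN, sa2 hN, sa3 hN, sa4 hN, sa5, sa6 hN, sa7 hN, sa8]
  ring

/-! ### Bridge: sum over configurations equals the 4-fold character sum -/

lemma indicator_prod (S : Finset (ZMod N)) (x z y w : ZMod N) :
    (if x ∈ S then ψ N x else 0) * ((if z ∈ S then ψ N z else 0)
        * ((if y ∈ S then ψ N (-y) else 0) * (if w ∈ S then ψ N (-w) else 0)))
      = if ({x, z, y, w} : Finset (ZMod N)) ⊆ S
          then ψ N x * ψ N z * ψ N (-y) * ψ N (-w) else 0 := by
  simp only [Finset.insert_subset_iff, Finset.singleton_subset_iff]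
  split_ifs <;> simp_all <;> ring

lemma bridge (k : ℕ) :
    ∑ S ∈ ((univ : Finset (Finset (ZMod N))).filter (fun S => S.card = k)),
        ((∑ x ∈ S, ψ N x) * (starRingEnd ℂ) (∑ x ∈ S, ψ N x))^2
      = ∑ x : ZMod N, ∑ z : ZMod N, ∑ y : ZMod N, ∑ w : ZMod N,
          ψ N x * ψ N z * ψ N (-y) * ψ N (-w)
            * ((cnt N k ({x, z, y, w} : Finset (ZMod N)).card : ℕ) : ℂ) := by
  have hconj : ∀ S : Finset (ZMod N),
      (starRingEnd ℂ) (∑ x ∈ S, ψ N x) = ∑ y ∈ S, ψ N (-y) := by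
    intro S
    rw [map_sum]
    exact Finset.sum_congr rfl fun x _ => psi_conj x
  have hexp : ∀ S : Finset (ZMod N),
      ((∑ x ∈ S, ψ N x) * (starRingEnd ℂ) (∑ x ∈ S, ψ N x))^2
        = ∑ x : ZMod N, ∑ z : ZMod N, ∑ y : ZMod N, ∑ w : ZMod N,
            (if x ∈ S then ψ N x else 0) * ((if z ∈ S then ψ N z else 0)
              * ((if y ∈ S then ψ N (-y) else 0) * (if w ∈ S then ψ N (-w) else 0))) := by
    intro S
    rw [hconj S]
    have e1 : (∑ x ∈ S, ψ N x) = ∑ x : ZMod N, (if x ∈ S then ψ N x else 0) := by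
      rw [Finset.sum_ite_mem, Finset.univ_inter]
    have e2 : (∑ y ∈ S, ψ N (-y)) = ∑ y : ZMod N, (if y ∈ S then ψ N (-y) else 0) := by
      rw [Finset.sum_ite_mem, Finset.univ_inter]
    rw [e1, e2]
    rw [show ((∑ x : ZMod N, (if x ∈ S then ψ N x else 0))
          * (∑ y : ZMod N, (if y ∈ S then ψ N (-y) else 0)))^2
        = (∑ x : ZMod N, (if x ∈ S then ψ N x else 0))
          * ((∑ x : ZMod N, (if x ∈ S then ψ N x else 0))
            * ((∑ y : ZMod N, (if y ∈ S then ψ N (-y) else 0))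
              * (∑ y : ZMod N, (if y ∈ S then ψ N (-y) else 0)))) by ring]
    rw [split4]
  simp only [hexp]
  rw [Finset.sum_comm]
  refine Finset.sum_congr rfl fun x _ => ?_
  rw [Finset.sum_comm]
  refine Finset.sum_congr rfl fun z _ => ?_
  rw [Finset.sum_comm]
  refine Finset.sum_congr rfl fun y _ => ?_
  rw [Finset.sum_comm]
  refine Finset.sum_congr rfl fun w _ => ?_
  simp only [indicator_prod]
  rw [Finset.sum_ite, Finset.sum_const, Finset.sum_const_zero, add_zero, nsmul_eq_mul]
  rw [count_supersets k {x, z, y, w}]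
  ring

/-! ### Binomial step identity -/

lemma cnt_step (N k j : ℕ) (hkN : k ≤ N) :
    (N - j) * cnt N k (j+1) = (k - j) * cnt N k j := by
  by_cases h1 : j + 1 ≤ k
  · have hjN : j < N := lt_of_lt_of_le h1 hkN
    simp only [cnt, if_pos h1, if_pos (Nat.le_of_succ_le h1)]
    have h := Nat.add_one_mul_choose_eq (N - j - 1) (k - j - 1)
    have e2 : N - j - 1 + 1 = N - j := by omega
    have e3 : k - j - 1 + 1 = k - j := by omega
    rw [e2, e3] at h
    have e4 : N - (j + 1) = N - j - 1 := by omega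
    have e5 : k - (j + 1) = k - j - 1 := by omega
    rw [e4, e5, h]
    exact Nat.mul_comm _ _
  · simp only [cnt, if_neg h1]
    have : k - j = 0 := by omega
    rw [this]
    simp

lemma cnt_zero_pos (N k : ℕ) (hkN : k ≤ N) : 0 < cnt N k 0 := by
  simp only [cnt, if_pos (Nat.zero_le k)]
  simp only [Nat.sub_zero]
  exact Nat.choose_pos hkN

end Stmt7Aux

open Stmt7Aux

set_option maxHeartbeats 2000000 in
/-- Under the uniform measure on configurations with exactly `k` particles on `Z/NZ`
(`k ≤ N/2`), the fourth moment of `a₁(η) = Σ_x η(x) cos(2πx/N)` is at most `C·k²`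
for a universal constant `C`. Configurations are identified with their particle sets. -/
theorem stmt_7 :
    ∃ C : ℝ, ∀ (N k : ℕ) [NeZero N], 1 ≤ k → 2 * k ≤ N →
      (∑ S ∈ Finset.univ.filter (fun S : Finset (ZMod N) => S.card = k),
          (∑ x ∈ S, Real.cos (2 * Real.pi * (x.val : ℝ) / N)) ^ 4)
          / ((Finset.univ.filter (fun S : Finset (ZMod N) => S.card = k)).card : ℝ)
        ≤ C * (k : ℝ) ^ 2 := by
  use 100
  intro N k _ hk1 hkN
  have hkN' : k ≤ N := by omega
  have hM0 : 0 < ((Finset.univ.filter (fun S : Finset (ZMod N) => S.card = k)).card) := by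
    rw [Finset.card_pos]
    obtain ⟨T, _, hTcard⟩ := Finset.exists_subset_card_eq (s := (Finset.univ : Finset (ZMod N))) (n := k)
      (by rw [Finset.card_univ, ZMod.card]; omega)
    exact ⟨T, by simp [hTcard]⟩
  rw [div_le_iff₀ (by exact_mod_cast hM0)]
  have hbound_pt : ∀ S ∈ Finset.univ.filter (fun S : Finset (ZMod N) => S.card = k),
      (∑ x ∈ S, Real.cos (2 * Real.pi * (x.val : ℝ) / N)) ^ 4 ≤ (k:ℝ)^4 := by
    intro S hS
    simp only [Finset.mem_filter, Finset.mem_univ, true_and] at hS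
    have habs : |∑ x ∈ S, Real.cos (2 * Real.pi * (x.val : ℝ) / N)| ≤ (k:ℝ) := by
      calc |∑ x ∈ S, Real.cos (2 * Real.pi * (x.val : ℝ) / N)|
          ≤ ∑ x ∈ S, |Real.cos (2 * Real.pi * (x.val : ℝ) / N)| := Finset.abs_sum_le_sum_abs _ _
        _ ≤ ∑ x ∈ S, 1 := Finset.sum_le_sum (fun x _ => Real.abs_cos_le_one _)
        _ = (k:ℝ) := by rw [Finset.sum_const, hS]; simp
    calc (∑ x ∈ S, Real.cos (2 * Real.pi * (x.val : ℝ) / N)) ^ 4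
        = |(∑ x ∈ S, Real.cos (2 * Real.pi * (x.val : ℝ) / N)) ^ 4| :=
          (_root_.abs_of_nonneg (by positivity)).symm
      _ = |∑ x ∈ S, Real.cos (2 * Real.pi * (x.val : ℝ) / N)| ^ 4 := (pow_abs _ _).symm
      _ ≤ (k:ℝ)^4 := pow_le_pow_left₀ (abs_nonneg _) habs 4
  by_cases hk10 : k ≤ 10
  · calc (∑ S ∈ Finset.univ.filter (fun S : Finset (ZMod N) => S.card = k),
          (∑ x ∈ S, Real.cos (2 * Real.pi * (x.val : ℝ) / N)) ^ 4)
        ≤ ∑ S ∈ Finset.univ.filter (fun S : Finset (ZMod N) => S.card = k), (k:ℝ)^4 :=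
          Finset.sum_le_sum hbound_pt
      _ = ((Finset.univ.filter (fun S : Finset (ZMod N) => S.card = k)).card : ℝ) * (k:ℝ)^4 := by
          rw [Finset.sum_const, nsmul_eq_mul]
      _ ≤ 100 * (k:ℝ)^2 * ((Finset.univ.filter (fun S : Finset (ZMod N) => S.card = k)).card : ℝ) := by
          have hk4 : (k:ℝ)^4 ≤ 100 * (k:ℝ)^2 := by
            have h10 : (k:ℝ) ≤ 10 := by exact_mod_cast hk10
            have h0 : (0:ℝ) ≤ (k:ℝ) := Nat.cast_nonneg k
            have h2 : (k:ℝ)^2 ≤ 100 := by nlinarith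
            nlinarith [mul_le_mul_of_nonneg_right h2 (sq_nonneg (k:ℝ))]
          have hM : (0:ℝ) ≤ ((Finset.univ.filter (fun S : Finset (ZMod N) => S.card = k)).card : ℝ) :=
            Nat.cast_nonneg _
          nlinarith
  · push_neg at hk10
    have hk11 : 11 ≤ k := hk10
    have hN22 : 22 ≤ N := by omega
    have hN3 : 3 ≤ N := by omega
    -- step 1: pointwise bound by |A|^4
    have hpoint : ∀ S ∈ Finset.univ.filter (fun S : Finset (ZMod N) => S.card = k),
        (∑ x ∈ S, Real.cos (2 * Real.pi * (x.val : ℝ) / N)) ^ 4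
          ≤ (Complex.normSq (∑ x ∈ S, ψ N x))^2 := by
      intro S _
      have hre : (∑ x ∈ S, Real.cos (2 * Real.pi * (x.val : ℝ) / N))
          = (∑ x ∈ S, ψ N x).re := by
        rw [Complex.re_sum]
        exact Finset.sum_congr rfl fun x _ => (psi_re x).symm
      rw [hre]
      set a := (∑ x ∈ S, ψ N x).re
      set b := (∑ x ∈ S, ψ N x).im
      have hns : Complex.normSq (∑ x ∈ S, ψ N x) = a^2 + b^2 := by
        rw [Complex.normSq_apply]; ring
      rw [hns]
      have h1 : a^4 = (a^2)^2 := by ring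
      rw [h1]
      exact pow_le_pow_left₀ (sq_nonneg a) (by nlinarith [sq_nonneg b]) 2
    -- step 2: sum bound
    have hsum : (∑ S ∈ Finset.univ.filter (fun S : Finset (ZMod N) => S.card = k),
          (∑ x ∈ S, Real.cos (2 * Real.pi * (x.val : ℝ) / N)) ^ 4)
        ≤ ∑ S ∈ Finset.univ.filter (fun S : Finset (ZMod N) => S.card = k),
            (Complex.normSq (∑ x ∈ S, ψ N x))^2 := Finset.sum_le_sum hpoint
    refine le_trans hsum ?_
    -- step 3: identify the sum of |A|^4 with the master value
    set c0 := cnt N k 0 with hc0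
    set c1 := cnt N k 1 with hc1
    set c2 := cnt N k 2 with hc2
    set c3 := cnt N k 3 with hc3
    set c4 := cnt N k 4 with hc4
    have hcard : ((Finset.univ.filter (fun S : Finset (ZMod N) => S.card = k)).card) = c0 := by
      have := count_supersets (N := N) k (∅ : Finset (ZMod N))
      simpa using this
    have hcplx : ((∑ S ∈ Finset.univ.filter (fun S : Finset (ZMod N) => S.card = k),
          (Complex.normSq (∑ x ∈ S, ψ N x))^2 : ℝ) : ℂ)
        = 2 * (N:ℂ)^2 * ((c2 : ℂ) - 2*(c3 : ℂ) + (c4 : ℂ))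
          + (N:ℂ) * ((c1 : ℂ) - 7*(c2 : ℂ) + 12*(c3 : ℂ) - 6*(c4 : ℂ)) := by
      have e1 : ((∑ S ∈ Finset.univ.filter (fun S : Finset (ZMod N) => S.card = k),
            (Complex.normSq (∑ x ∈ S, ψ N x))^2 : ℝ) : ℂ)
          = ∑ S ∈ Finset.univ.filter (fun S : Finset (ZMod N) => S.card = k),
              ((∑ x ∈ S, ψ N x) * (starRingEnd ℂ) (∑ x ∈ S, ψ N x))^2 := by
        push_cast
        refine Finset.sum_congr rfl fun S _ => ?_
        rw [Complex.mul_conj]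
      rw [e1, bridge k, master k hN3]
    have hreal : (∑ S ∈ Finset.univ.filter (fun S : Finset (ZMod N) => S.card = k),
          (Complex.normSq (∑ x ∈ S, ψ N x))^2)
        = 2 * (N:ℝ)^2 * ((c2 : ℝ) - 2*(c3 : ℝ) + (c4 : ℝ))
          + (N:ℝ) * ((c1 : ℝ) - 7*(c2 : ℝ) + 12*(c3 : ℝ) - 6*(c4 : ℝ)) := by
      have h2 : ((2 * (N:ℝ)^2 * ((c2 : ℝ) - 2*(c3 : ℝ) + (c4 : ℝ))
          + (N:ℝ) * ((c1 : ℝ) - 7*(c2 : ℝ) + 12*(c3 : ℝ) - 6*(c4 : ℝ)) : ℝ) : ℂ)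
          = 2 * (N:ℂ)^2 * ((c2 : ℂ) - 2*(c3 : ℂ) + (c4 : ℂ))
            + (N:ℂ) * ((c1 : ℂ) - 7*(c2 : ℂ) + 12*(c3 : ℂ) - 6*(c4 : ℂ)) := by
        push_cast
        ring
      exact_mod_cast hcplx.trans h2.symm
    rw [hreal, hcard]
    -- step 4: numeric bounds
    have q1 : (N:ℝ) * c1 = (k:ℝ) * c0 := by
      have := cnt_step N k 0 hkN'
      simp only [Nat.sub_zero] at this
      exact_mod_cast this
    have s1 : ((N:ℝ) - 1) * c2 = ((k:ℝ) - 1) * c1 := by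
      have := cnt_step N k 1 hkN'
      have h := congrArg (fun n : ℕ => (n : ℝ)) this
      push_cast [Nat.cast_sub (by omega : 1 ≤ N), Nat.cast_sub (by omega : 1 ≤ k)] at h
      exact h
    have s2 : ((N:ℝ) - 2) * c3 = ((k:ℝ) - 2) * c2 := by
      have := cnt_step N k 2 hkN'
      have h := congrArg (fun n : ℕ => (n : ℝ)) this
      push_cast [Nat.cast_sub (by omega : 2 ≤ N), Nat.cast_sub (by omega : 2 ≤ k)] at h
      exact h
    have s3 : ((N:ℝ) - 3) * c4 = ((k:ℝ) - 3) * c3 := by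
      have := cnt_step N k 3 hkN'
      have h := congrArg (fun n : ℕ => (n : ℝ)) this
      push_cast [Nat.cast_sub (by omega : 3 ≤ N), Nat.cast_sub (by omega : 3 ≤ k)] at h
      exact h
    have q2 : (N:ℝ) * ((N:ℝ) - 1) * c2 = (k:ℝ) * ((k:ℝ) - 1) * c0 := by
      linear_combination (N:ℝ) * s1 + ((k:ℝ) - 1) * q1
    have q3 : (N:ℝ) * ((N:ℝ) - 1) * ((N:ℝ) - 2) * c3
        = (k:ℝ) * ((k:ℝ) - 1) * ((k:ℝ) - 2) * c0 := by
      linear_combination (N:ℝ) * ((N:ℝ) - 1) * s2 + ((k:ℝ) - 2) * q2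
    have q4 : (N:ℝ) * ((N:ℝ) - 1) * ((N:ℝ) - 2) * ((N:ℝ) - 3) * c4
        = (k:ℝ) * ((k:ℝ) - 1) * ((k:ℝ) - 2) * ((k:ℝ) - 3) * c0 := by
      linear_combination (N:ℝ) * ((N:ℝ) - 1) * ((N:ℝ) - 2) * s3 + ((k:ℝ) - 3) * q3
    have hNk : 2 * (k:ℝ) ≤ (N:ℝ) := by exact_mod_cast hkN
    have hk11' : (11:ℝ) ≤ (k:ℝ) := by exact_mod_cast hk11
    have hN22' : (22:ℝ) ≤ (N:ℝ) := by exact_mod_cast hN22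
    have hc0nn : (0:ℝ) ≤ c0 := Nat.cast_nonneg _
    have hc1nn : (0:ℝ) ≤ c1 := Nat.cast_nonneg _
    have hc2nn : (0:ℝ) ≤ c2 := Nat.cast_nonneg _
    have hc3nn : (0:ℝ) ≤ c3 := Nat.cast_nonneg _
    have hc4nn : (0:ℝ) ≤ c4 := Nat.cast_nonneg _
    -- bound 2: N^2 c2 ≤ 2 k^2 c0
    have hb2 : (N:ℝ)^2 * c2 ≤ 2 * (k:ℝ)^2 * c0 := by
      have hpos : (0:ℝ) < (N:ℝ) - 1 := by linarith
      have key : ((N:ℝ)^2 * c2) * ((N:ℝ) - 1) ≤ (2 * (k:ℝ)^2 * c0) * ((N:ℝ) - 1) := by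
        have e : ((N:ℝ)^2 * c2) * ((N:ℝ) - 1) = (N:ℝ) * ((k:ℝ) * ((k:ℝ) - 1) * c0) := by
          linear_combination (N:ℝ) * q2
        rw [e]
        have hfac : (0:ℝ) ≤ (k:ℝ)*(N:ℝ) - 2*(k:ℝ) + (N:ℝ) := by nlinarith
        nlinarith [mul_nonneg (mul_nonneg (by linarith : (0:ℝ) ≤ (k:ℝ)) hc0nn) hfac]
      exact le_of_mul_le_mul_right key hpos
    -- bound 3: N c3 ≤ k c0
    have hb3 : (N:ℝ) * c3 ≤ (k:ℝ) * c0 := by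
      have hpos : (0:ℝ) < ((N:ℝ) - 1) * ((N:ℝ) - 2) :=
        mul_pos (by linarith) (by linarith)
      have a1 : ((k:ℝ) - 1) * ((k:ℝ) - 2) ≤ ((N:ℝ) - 1) * ((N:ℝ) - 2) :=
        mul_le_mul (by linarith) (by linarith) (by linarith) (by linarith)
      have key : ((N:ℝ) * c3) * (((N:ℝ) - 1) * ((N:ℝ) - 2))
          ≤ ((k:ℝ) * c0) * (((N:ℝ) - 1) * ((N:ℝ) - 2)) := by
        have e : ((N:ℝ) * c3) * (((N:ℝ) - 1) * ((N:ℝ) - 2))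
            = ((k:ℝ) * c0) * (((k:ℝ) - 1) * ((k:ℝ) - 2)) := by
          linear_combination q3
        rw [e]
        have hkc0 : (0:ℝ) ≤ (k:ℝ) * c0 := mul_nonneg (by linarith) hc0nn
        exact mul_le_mul_of_nonneg_left a1 hkc0
      exact le_of_mul_le_mul_right key hpos
    -- bound 4: N^2 c4 ≤ k^2 c0
    have hb4 : (N:ℝ)^2 * c4 ≤ (k:ℝ)^2 * c0 := by
      have hpos : (0:ℝ) < ((N:ℝ) - 1) * ((N:ℝ) - 2) * ((N:ℝ) - 3) :=
        mul_pos (mul_pos (by linarith) (by linarith)) (by linarith)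
      have a1 : ((k:ℝ) - 1) * ((k:ℝ) - 2) ≤ ((N:ℝ) - 2) * ((N:ℝ) - 3) :=
        mul_le_mul (by linarith) (by linarith) (by linarith) (by linarith)
      have a2 : ((k:ℝ) - 3) * (N:ℝ) ≤ (k:ℝ) * ((N:ℝ) - 1) := by nlinarith
      have a12 : (((k:ℝ) - 1) * ((k:ℝ) - 2)) * (((k:ℝ) - 3) * (N:ℝ))
          ≤ (((N:ℝ) - 2) * ((N:ℝ) - 3)) * ((k:ℝ) * ((N:ℝ) - 1)) :=
        mul_le_mul a1 a2 (by nlinarith) (by nlinarith)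
      have key : ((N:ℝ)^2 * c4) * (((N:ℝ) - 1) * ((N:ℝ) - 2) * ((N:ℝ) - 3))
          ≤ ((k:ℝ)^2 * c0) * (((N:ℝ) - 1) * ((N:ℝ) - 2) * ((N:ℝ) - 3)) := by
        have e : ((N:ℝ)^2 * c4) * (((N:ℝ) - 1) * ((N:ℝ) - 2) * ((N:ℝ) - 3))
            = (N:ℝ) * ((k:ℝ) * ((k:ℝ) - 1) * ((k:ℝ) - 2) * ((k:ℝ) - 3) * c0) := by
          linear_combination (N:ℝ) * q4
        rw [e]
        nlinarith [mul_le_mul_of_nonneg_left a12 (mul_nonneg (by linarith : (0:ℝ) ≤ (k:ℝ)) hc0nn)]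
      exact le_of_mul_le_mul_right key hpos
    -- final assembly
    have hkk : (k:ℝ) ≤ (k:ℝ)^2 := by nlinarith
    have h_kc0 : (k:ℝ) * c0 ≤ (k:ℝ)^2 * c0 := by
      nlinarith [mul_nonneg (sub_nonneg.mpr hkk) hc0nn]
    have n1 : (0:ℝ) ≤ (N:ℝ)^2 * c3 := by positivity
    have n2 : (0:ℝ) ≤ (N:ℝ) * c2 := by positivity
    have n3 : (0:ℝ) ≤ (N:ℝ) * c4 := by positivity
    have n4 : (0:ℝ) ≤ (k:ℝ)^2 * c0 := by positivity
    linarith [hb2, hb3, hb4, q1, h_kc0, n1, n2, n3, n4]
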